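/- Let A be a real n×n matrix, let P_1, …, P_m be symmetric positive definite n×n matrices, and suppose there exist scalars α_{rs} > 0 such that for every r ∈ {1,…,m}: A^T P_r + P_r A ≺ Σ_{s≠r} α_{rs} (P_s − P_r). Define V(x) = max_{1≤r≤m} x^T P_r x. Then for every x ≠ 0 the function t ↦ V(exp(tA) x) is strictly decreasing on [0, ∞); in particular V(exp(tA)x) < V(x) for all t > 0 and all x ≠ 0. -/

import Mathlib

open Matrix NormedSpace

/-- The piece-wise quadratic function `V(x) = max_{1 ≤ r ≤ m} xᵀ P_r x`. -/
noncomputable def pwMax {n m : ℕ} (hm : 0 < m)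
    (P : Fin m → Matrix (Fin n) (Fin n) ℝ) (x : Fin n → ℝ) : ℝ :=
  Finset.univ.sup' (Finset.univ_nonempty_iff.mpr ⟨⟨0, hm⟩⟩)
    (fun r : Fin m => x ⬝ᵥ P r *ᵥ x)

private lemma mulVec_sum' {n : ℕ} {ι : Type*} (s : Finset ι)
    (M : ι → Matrix (Fin n) (Fin n) ℝ) (v : Fin n → ℝ) :
    (∑ i ∈ s, M i) *ᵥ v = ∑ i ∈ s, M i *ᵥ v := by
  induction s using Finset.cons_induction with
  | empty => simp [Matrix.zero_mulVec]
  | cons a s ha ih => simp [Matrix.add_mulVec, ih]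

private lemma dotProduct_sum' {n : ℕ} {ι : Type*} (s : Finset ι)
    (u : Fin n → ℝ) (v : ι → Fin n → ℝ) :
    u ⬝ᵥ (∑ i ∈ s, v i) = ∑ i ∈ s, u ⬝ᵥ v i := by
  induction s using Finset.cons_induction with
  | empty => simp
  | cons a s ha ih => simp [dotProduct_add, ih]

/-- Derivative of the quadratic form along the flow. -/
private lemma quad_hasDerivAt {n : ℕ} (A P : Matrix (Fin n) (Fin n) ℝ)
    (x : Fin n → ℝ) (t : ℝ) :
    HasDerivAt (fun u : ℝ => (NormedSpace.exp (u • A) *ᵥ x) ⬝ᵥ P *ᵥ (NormedSpace.exp (u • A) *ᵥ x))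
      ((NormedSpace.exp (t • A) *ᵥ x) ⬝ᵥ ((Aᵀ * P + P * A) *ᵥ (NormedSpace.exp (t • A) *ᵥ x))) t := by
  letI : SeminormedRing (Matrix (Fin n) (Fin n) ℝ) := Matrix.linftyOpSemiNormedRing
  letI : NormedRing (Matrix (Fin n) (Fin n) ℝ) := Matrix.linftyOpNormedRing
  letI : NormedAlgebra ℝ (Matrix (Fin n) (Fin n) ℝ) := Matrix.linftyOpNormedAlgebra
  have hexp : HasDerivAt (fun u : ℝ => NormedSpace.exp (u • A)) (A * NormedSpace.exp (t • A)) t :=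
    hasDerivAt_exp_smul_const' A t
  set y := NormedSpace.exp (t • A) *ᵥ x with hy
  have hco : ∀ i : Fin n,
      HasDerivAt (fun u : ℝ => (NormedSpace.exp (u • A) *ᵥ x) i) ((A *ᵥ y) i) t := by
    intro i
    let L : Matrix (Fin n) (Fin n) ℝ →ₗ[ℝ] ℝ :=
      { toFun := fun M => (M *ᵥ x) i
        map_add' := fun M N => by simp [Matrix.add_mulVec]
        map_smul' := fun c M => by simp [Matrix.smul_mulVec] }
    have h := (LinearMap.toContinuousLinearMap L).hasFDerivAt.comp_hasDerivAt t hexp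
    have h' : HasDerivAt (fun u : ℝ => L (NormedSpace.exp (u • A))) (L (A * NormedSpace.exp (t • A))) t := h
    have hval : L (A * NormedSpace.exp (t • A)) = (A *ᵥ y) i := by
      show ((A * NormedSpace.exp (t • A)) *ᵥ x) i = (A *ᵥ y) i
      rw [hy, ← Matrix.mulVec_mulVec]
    rw [hval] at h'
    exact h'
  have hsum : HasDerivAt
      (fun u : ℝ => ∑ i, (NormedSpace.exp (u • A) *ᵥ x) i * ∑ j, P i j * (NormedSpace.exp (u • A) *ᵥ x) j)
      (∑ i, ((A *ᵥ y) i * ∑ j, P i j * y j + y i * ∑ j, P i j * (A *ᵥ y) j)) t := by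
    refine HasDerivAt.fun_sum fun i _ => ?_
    exact (hco i).mul (HasDerivAt.fun_sum fun j _ => (hco j).const_mul (P i j))
  have hfun : (fun u : ℝ => (NormedSpace.exp (u • A) *ᵥ x) ⬝ᵥ P *ᵥ (NormedSpace.exp (u • A) *ᵥ x)) =
      (fun u : ℝ => ∑ i, (NormedSpace.exp (u • A) *ᵥ x) i * ∑ j, P i j * (NormedSpace.exp (u • A) *ᵥ x) j) := by
    funext u
    simp [dotProduct, Matrix.mulVec]
  have hval : (∑ i, ((A *ᵥ y) i * ∑ j, P i j * y j + y i * ∑ j, P i j * (A *ᵥ y) j))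
      = y ⬝ᵥ ((Aᵀ * P + P * A) *ᵥ y) := by
    have h1 : (∑ i, (A *ᵥ y) i * ∑ j, P i j * y j) = (A *ᵥ y) ⬝ᵥ (P *ᵥ y) := by
      simp [dotProduct, Matrix.mulVec]
    have h2 : (∑ i, y i * ∑ j, P i j * (A *ᵥ y) j) = y ⬝ᵥ (P *ᵥ (A *ᵥ y)) := by
      simp [dotProduct, Matrix.mulVec]
    rw [Finset.sum_add_distrib, h1, h2, Matrix.add_mulVec, dotProduct_add,
      ← Matrix.mulVec_mulVec, ← Matrix.mulVec_mulVec]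
    congr 1
    rw [Matrix.dotProduct_mulVec y Aᵀ (P *ᵥ y), Matrix.vecMul_transpose]
  rw [hfun, ← hval]
  exact hsum

private lemma exp_mulVec_ne_zero {n : ℕ} (A : Matrix (Fin n) (Fin n) ℝ) (t : ℝ)
    {x : Fin n → ℝ} (hx : x ≠ 0) : NormedSpace.exp (t • A) *ᵥ x ≠ 0 := by
  intro h
  apply hx
  have h1 : NormedSpace.exp (-(t • A)) * NormedSpace.exp (t • A) = 1 := by
    rw [← Matrix.exp_add_of_commute _ _ ((Commute.refl (t • A)).neg_left)]
    simp
  have h2 : NormedSpace.exp (-(t • A)) *ᵥ (NormedSpace.exp (t • A) *ᵥ x) = x := by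
    rw [Matrix.mulVec_mulVec, h1, Matrix.one_mulVec]
  rw [h, Matrix.mulVec_zero] at h2
  exact h2.symm

private lemma quad_deriv_neg {n m : ℕ} (A : Matrix (Fin n) (Fin n) ℝ)
    (P : Fin m → Matrix (Fin n) (Fin n) ℝ) (α : Fin m → Fin m → ℝ)
    (hα : ∀ r s, 0 < α r s)
    (hineq : ∀ r : Fin m,
      ((∑ s ∈ Finset.univ.erase r, α r s • (P s - P r)) -
        (Aᵀ * P r + P r * A)).PosDef)
    (r : Fin m) {y : Fin n → ℝ} (hy : y ≠ 0)
    (hmax : ∀ s, y ⬝ᵥ P s *ᵥ y ≤ y ⬝ᵥ P r *ᵥ y) :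
    y ⬝ᵥ ((Aᵀ * P r + P r * A) *ᵥ y) < 0 := by
  have h := (hineq r).dotProduct_mulVec_pos hy
  rw [star_trivial, Matrix.sub_mulVec, dotProduct_sub, sub_pos] at h
  refine h.trans_le ?_
  rw [mulVec_sum', dotProduct_sum']
  refine Finset.sum_nonpos fun s hs => ?_
  have : y ⬝ᵥ (α r s • (P s - P r)) *ᵥ y = α r s * (y ⬝ᵥ P s *ᵥ y - y ⬝ᵥ P r *ᵥ y) := by
    rw [Matrix.smul_mulVec, dotProduct_smul, Matrix.sub_mulVec, dotProduct_sub]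
    simp [smul_eq_mul]
  rw [this]
  exact mul_nonpos_iff.mpr (Or.inl ⟨(hα r s).le, sub_nonpos.mpr (hmax s)⟩)

/-- Local behaviour of a function with negative derivative. -/
private lemma deriv_neg_local {f : ℝ → ℝ} {t d : ℝ} (hf : HasDerivAt f d t) (hd : d < 0) :
    (∀ᶠ v in nhdsWithin t (Set.Ioi t), f v < f t) ∧
    (∀ᶠ v in nhdsWithin t (Set.Iio t), f t < f v) := by
  have hs := hasDerivAt_iff_tendsto_slope.mp hf
  have hmem : ∀ᶠ v in nhdsWithin t {t}ᶜ, slope f t v < 0 := hs (Iio_mem_nhds hd)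
  constructor
  · have h1 : ∀ᶠ v in nhdsWithin t (Set.Ioi t), slope f t v < 0 :=
      hmem.filter_mono (nhdsWithin_mono t fun v hv => ne_of_gt hv)
    filter_upwards [h1, self_mem_nhdsWithin] with v hv hv'
    have hvt : (0 : ℝ) < v - t := sub_pos.mpr hv'
    have heq : f v - f t = slope f t v * (v - t) := by
      rw [slope_def_field, div_mul_cancel₀ _ hvt.ne']
    nlinarith
  · have h1 : ∀ᶠ v in nhdsWithin t (Set.Iio t), slope f t v < 0 :=
      hmem.filter_mono (nhdsWithin_mono t fun v hv => ne_of_lt hv)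
    filter_upwards [h1, self_mem_nhdsWithin] with v hv hv'
    have hvt : v - t < (0 : ℝ) := sub_neg.mpr hv'
    have heq : f v - f t = slope f t v * (v - t) := by
      rw [slope_def_field, div_mul_cancel₀ _ hvt.ne]
    nlinarith

/-- under the BMI condition (8), the piece-wise quadratic function
`V(x) = max_r xᵀ P_r x` is strictly decreasing along every nonzero trajectory of
`ẋ = Ax`; in particular `V(exp(tA)x) < V(x)` for all `t > 0` and `x ≠ 0`. -/
theorem pwMax_strictly_decreasing_along_flow
    (n m : ℕ) (hm : 0 < m) (A : Matrix (Fin n) (Fin n) ℝ)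
    (P : Fin m → Matrix (Fin n) (Fin n) ℝ)
    (hPsymm : ∀ r, (P r).IsSymm) (hPpos : ∀ r, (P r).PosDef)
    (α : Fin m → Fin m → ℝ) (hα : ∀ r s, 0 < α r s)
    (hineq : ∀ r : Fin m,
      ((∑ s ∈ Finset.univ.erase r, α r s • (P s - P r)) -
        (Aᵀ * P r + P r * A)).PosDef) :
    ∀ x : Fin n → ℝ, x ≠ 0 →
      StrictAntiOn (fun t : ℝ => pwMax hm P (NormedSpace.exp (t • A) *ᵥ x)) (Set.Ici 0) ∧
      ∀ t : ℝ, 0 < t → pwMax hm P (NormedSpace.exp (t • A) *ᵥ x) < pwMax hm P x := by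
  intro x hx
  have hne : (Finset.univ : Finset (Fin m)).Nonempty :=
    Finset.univ_nonempty_iff.mpr ⟨⟨0, hm⟩⟩
  set g : Fin m → ℝ → ℝ :=
    fun r t => (NormedSpace.exp (t • A) *ᵥ x) ⬝ᵥ P r *ᵥ (NormedSpace.exp (t • A) *ᵥ x) with hg
  set f : ℝ → ℝ := fun t => pwMax hm P (NormedSpace.exp (t • A) *ᵥ x) with hf
  have hfg : ∀ t, f t = Finset.univ.sup' hne (fun r => g r t) := fun t => rfl
  have hder : ∀ r t, HasDerivAt (g r)
      ((NormedSpace.exp (t • A) *ᵥ x) ⬝ᵥ ((Aᵀ * P r + P r * A) *ᵥ (NormedSpace.exp (t • A) *ᵥ x))) t :=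
    fun r t => quad_hasDerivAt A (P r) x t
  -- local behaviour of f at every time t
  have key : ∀ t : ℝ, (∀ᶠ v in nhdsWithin t (Set.Ioi t), f v < f t) ∧
      (∀ᶠ v in nhdsWithin t (Set.Iio t), f t < f v) := by
    intro t
    have hy0 : NormedSpace.exp (t • A) *ᵥ x ≠ 0 := exp_mulVec_ne_zero A t hx
    have hderneg : ∀ r : Fin m, g r t = f t →
        ((NormedSpace.exp (t • A) *ᵥ x) ⬝ᵥ ((Aᵀ * P r + P r * A) *ᵥ (NormedSpace.exp (t • A) *ᵥ x))) < 0 := by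
      intro r hr
      refine quad_deriv_neg A P α hα hineq r hy0 fun s => ?_
      have hle : g s t ≤ f t := Finset.le_sup' (fun r => g r t) (Finset.mem_univ s)
      rw [← hr] at hle
      exact hle
    constructor
    · -- right decrease
      have hR : ∀ r : Fin m, ∀ᶠ v in nhdsWithin t (Set.Ioi t), g r v < f t := by
        intro r
        have hle : g r t ≤ f t := Finset.le_sup' (fun r => g r t) (Finset.mem_univ r)
        rcases lt_or_eq_of_le hle with hlt | heq
        · have hc : ContinuousAt (g r) t := (hder r t).continuousAt
          have : {v | g r v < f t} ∈ nhds t := hc (Iio_mem_nhds hlt)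
          exact (nhdsWithin_le_nhds this : _)
        · have := (deriv_neg_local (hder r t) (hderneg r heq)).1
          filter_upwards [this] with v hv
          exact hv.trans_eq heq
      have hall : ∀ᶠ v in nhdsWithin t (Set.Ioi t), ∀ r : Fin m, g r v < f t :=
        Filter.eventually_all.mpr hR
      filter_upwards [hall] with v hv
      rw [hfg v, Finset.sup'_lt_iff]
      exact fun r _ => hv r
    · -- left increase
      obtain ⟨r₀, -, hr₀⟩ := Finset.exists_mem_eq_sup' hne (fun r => g r t)
      have heq : g r₀ t = f t := (hfg t ▸ hr₀).symm
      have := (deriv_neg_local (hder r₀ t) (hderneg r₀ heq)).2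
      filter_upwards [this] with v hv
      calc f t = g r₀ t := heq.symm
        _ < g r₀ v := hv
        _ ≤ f v := hfg v ▸ Finset.le_sup' (fun r => g r v) (Finset.mem_univ r₀)
  -- globalization
  have main : ∀ t₀ t₁ : ℝ, t₀ < t₁ → f t₁ < f t₀ := by
    intro t₀ t₁ ht
    set c := f t₀ with hc
    set S : Set ℝ := {u | u ∈ Set.Icc t₀ t₁ ∧ ∀ v ∈ Set.Ioc t₀ u, f v < c} with hS
    have ht₀S : t₀ ∈ S := ⟨⟨le_refl _, ht.le⟩, fun v hv => absurd (hv.1.trans_le hv.2) (lt_irrefl _)⟩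
    have hbdd : BddAbove S := ⟨t₁, fun u hu => hu.1.2⟩
    have hSne : S.Nonempty := ⟨t₀, ht₀S⟩
    set b := sSup S with hb
    have hb₀ : t₀ ≤ b := le_csSup hbdd ht₀S
    have hb₁ : b ≤ t₁ := csSup_le hSne fun u hu => hu.1.2
    have hlt : ∀ v, t₀ < v → v < b → f v < c := by
      intro v hv₀ hvb
      obtain ⟨u, huS, hvu⟩ := exists_lt_of_lt_csSup hSne hvb
      exact huS.2 v ⟨hv₀, hvu.le⟩
    have hbc : t₀ < b → f b < c := by
      intro h0b
      have hIoo : Set.Ioo t₀ b ∈ nhdsWithin b (Set.Iio b) :=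
        Ioo_mem_nhdsLT_of_mem ⟨h0b, le_refl b⟩
      obtain ⟨v, hv1, hv2⟩ :=
        ((key b).2.and (Filter.eventually_of_mem hIoo fun v hv => hv)).exists
      exact hv1.trans (hlt v hv2.1 hv2.2)
    have hbt₁ : b = t₁ := by
      by_contra hne'
      have hblt : b < t₁ := lt_of_le_of_ne hb₁ hne'
      have hmem : {v | f v < f b} ∈ nhdsWithin b (Set.Ioi b) := (key b).1
      obtain ⟨u, hu, hsub⟩ := mem_nhdsGT_iff_exists_Ioc_subset.mp hmem
      have hbu' : b < min u t₁ := lt_min hu hblt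
      have hfbc : f b ≤ c := by
        rcases eq_or_lt_of_le hb₀ with h0 | h0
        · rw [← h0]
        · exact (hbc h0).le
      have hu'S : min u t₁ ∈ S := by
        refine ⟨⟨hb₀.trans hbu'.le, min_le_right _ _⟩, ?_⟩
        intro v hv
        rcases lt_trichotomy v b with h | h | h
        · exact hlt v hv.1 h
        · rw [h]
          exact hbc (h ▸ hv.1)
        · have : f v < f b := hsub ⟨h, hv.2.trans (min_le_left _ _)⟩
          exact this.trans_le hfbc
      exact absurd (le_csSup hbdd hu'S) (not_le.mpr hbu')
    have := hbc (hbt₁ ▸ ht)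
    rwa [hbt₁] at this
  constructor
  · intro s _ t _ hst
    exact main s t hst
  · intro t ht
    have h0 : f 0 = pwMax hm P x := by
      rw [hf]
      simp [zero_smul, exp_zero, Matrix.one_mulVec]
    rw [← h0]
    exact main 0 t ht
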